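/- Let r > 0, λ > 0, c > 0, q > 0, θ ∈ ℝ be fixed, let f and w(·, θ) be differentiable functions of l, and define c_eff := (1 + r/λ)·c and, for v > 0, l(v) := q·v/λ and F(v) := f(l(v)) − w(l(v), θ)·l(v) − c_eff·v. Then F′(v) = 0 if and only if f′(l(v)) − w(l(v), θ) − w_l(l(v), θ)·l(v) = (r + λ)·c/q, where w_l denotes the partial derivative of w with respect to l. That is, the tightness-taking firm's steady-state first-order condition under the calibrated cost c_eff is exactly the economic job-creation condition. -/

import Mathlib

/-- under the calibrated cost `c_eff := (1 + r/λ)·c`, with tightness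
(hence `q`) fixed and steady-state employment `l(v) = q·v/λ`, the tightness-taking
firm's first-order condition `F′(v) = 0` for
`F(v) = f(l(v)) − w(l(v), θ)·l(v) − c_eff·v` is exactly the economic job-creation
condition `f′(l) − w(l, θ) − w_l·l = (r + λ)·c/q`. -/
theorem calibrated_cost_recovers_job_creation
    (r lam c q θ : ℝ) (hr : 0 < r) (hlam : 0 < lam) (hc : 0 < c) (hq : 0 < q)
    (f : ℝ → ℝ) (w : ℝ × ℝ → ℝ)
    (hf : Differentiable ℝ f)
    (hw : Differentiable ℝ (fun x : ℝ => w (x, θ)))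
    (c_eff : ℝ) (hceff : c_eff = (1 + r / lam) * c)
    (l : ℝ → ℝ) (hl : l = fun v : ℝ => q * v / lam)
    (F : ℝ → ℝ)
    (hF : F = fun v : ℝ => f (l v) - w (l v, θ) * l v - c_eff * v) :
    ∀ v : ℝ, 0 < v →
      (deriv F v = 0 ↔
        deriv f (l v) - w (l v, θ)
            - deriv (fun x : ℝ => w (x, θ)) (l v) * l v
          = (r + lam) * c / q) := by
  intro v hv
  subst hl hF
  set g : ℝ → ℝ := fun x => w (x, θ) with hg
  set L : ℝ := q * v / lam with hL
  have hl' : HasDerivAt (fun v : ℝ => q * v / lam) (q / lam) v := by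
    simpa using ((hasDerivAt_id v).const_mul q).div_const lam
  have h1 : HasDerivAt (fun v : ℝ => f (q * v / lam)) (deriv f L * (q / lam)) v :=
    ((hf L).hasDerivAt).comp v hl'
  have h2 : HasDerivAt (fun v : ℝ => g (q * v / lam)) (deriv g L * (q / lam)) v :=
    HasDerivAt.comp (h₂ := g) v ((hw L).hasDerivAt) hl'
  have h3 : HasDerivAt (fun v : ℝ => g (q * v / lam) * (q * v / lam))
      (deriv g L * (q / lam) * L + g L * (q / lam)) v := h2.mul hl'
  have h4 : HasDerivAt (fun v : ℝ => c_eff * v) c_eff v := by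
    simpa using (hasDerivAt_id v).const_mul c_eff
  have hFd : HasDerivAt
      (fun v : ℝ => f (q * v / lam) - g (q * v / lam) * (q * v / lam) - c_eff * v)
      (deriv f L * (q / lam) - (deriv g L * (q / lam) * L + g L * (q / lam)) - c_eff) v :=
    (h1.sub h3).sub h4
  rw [hFd.deriv, hceff]
  have hgL : g L = w (L, θ) := rfl
  rw [hgL, hL]
  have hq' : q ≠ 0 := hq.ne'
  have hlam' : lam ≠ 0 := hlam.ne'
  constructor
  · intro h; field_simp at h ⊢
    apply mul_left_cancel₀ (pow_ne_zero 3 hlam')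
    linear_combination lam ^ 3 * h
  · intro h; field_simp at h ⊢; linear_combination h
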